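/- (Discrete Fenchel) Let p₀, p₁, …, pₙ = p₀ be a closed polygon in ℝ³ with at least 3 distinct vertices and all consecutive vertices distinct. Then the total curvature (sum of exterior angles at all vertices, with indices taken cyclically) is at least 2π. -/

import Mathlib

open Real InnerProductGeometry RealInnerProductSpace


private lemma angle_triangle_of_unit {V : Type*} [NormedAddCommGroup V] [InnerProductSpace ℝ V] {x y z : V} (hx : ‖x‖ = 1) (hy : ‖y‖ = 1) (hz : ‖z‖ = 1) :
    angle x z ≤ angle x y + angle y z := by
  rcases le_or_gt π (angle x y + angle y z) with h | h
  · exact (angle_le_pi x z).trans h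
  · have hyy : ⟪y, y⟫ = (1:ℝ) := by
      rw [real_inner_self_eq_norm_sq, hy]; norm_num
    have hxy : angle x y = Real.arccos ⟪x, y⟫ := by rw [angle, hx, hy]; norm_num
    have hyz : angle y z = Real.arccos ⟪y, z⟫ := by rw [angle, hy, hz]; norm_num
    have hxz : angle x z = Real.arccos ⟪x, z⟫ := by rw [angle, hx, hz]; norm_num
    have hp1 : |⟪x, y⟫| ≤ 1 := by
      have := abs_real_inner_le_norm x y; rwa [hx, hy, one_mul] at this
    have hq1 : |⟪y, z⟫| ≤ 1 := by
      have := abs_real_inner_le_norm y z; rwa [hy, hz, one_mul] at this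
    have h1 : ⟪x - ⟪x, y⟫ • y, z - ⟪y, z⟫ • y⟫ = ⟪x, z⟫ - ⟪x, y⟫ * ⟪y, z⟫ := by
      simp only [inner_sub_left, inner_sub_right, real_inner_smul_left, real_inner_smul_right,
        hyy, real_inner_comm y x]
      ring
    have hxx : ⟪x, x⟫ = (1:ℝ) := by
      rw [real_inner_self_eq_norm_sq, hx]; norm_num
    have hzz : ⟪z, z⟫ = (1:ℝ) := by
      rw [real_inner_self_eq_norm_sq, hz]; norm_num
    have h2 : ‖x - ⟪x, y⟫ • y‖ ^ 2 = 1 - ⟪x, y⟫ ^ 2 := by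
      rw [← real_inner_self_eq_norm_sq]
      simp only [inner_sub_left, inner_sub_right, real_inner_smul_left, real_inner_smul_right,
        hyy, hxx, real_inner_comm y x]
      ring
    have h3 : ‖z - ⟪y, z⟫ • y‖ ^ 2 = 1 - ⟪y, z⟫ ^ 2 := by
      rw [← real_inner_self_eq_norm_sq]
      simp only [inner_sub_left, inner_sub_right, real_inner_smul_left, real_inner_smul_right,
        hyy, hzz, real_inner_comm y z]
      ring
    have hup : Real.sqrt (1 - ⟪x, y⟫ ^ 2) = ‖x - ⟪x, y⟫ • y‖ := by
      rw [← h2, Real.sqrt_sq (norm_nonneg _)]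
    have huq : Real.sqrt (1 - ⟪y, z⟫ ^ 2) = ‖z - ⟪y, z⟫ • y‖ := by
      rw [← h3, Real.sqrt_sq (norm_nonneg _)]
    have key : ⟪x, y⟫ * ⟪y, z⟫ - Real.sqrt (1 - ⟪x, y⟫ ^ 2) * Real.sqrt (1 - ⟪y, z⟫ ^ 2)
        ≤ ⟪x, z⟫ := by
      have habs := abs_real_inner_le_norm (x - ⟪x, y⟫ • y) (z - ⟪y, z⟫ • y)
      rw [h1] at habs
      rw [hup, huq]
      have := (abs_le.mp habs).1
      linarith
    have hcos : Real.cos (angle x y + angle y z) ≤ ⟪x, z⟫ := by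
      rw [Real.cos_add, hxy, hyz, Real.cos_arccos (abs_le.mp hp1).1 (abs_le.mp hp1).2,
        Real.cos_arccos (abs_le.mp hq1).1 (abs_le.mp hq1).2, Real.sin_arccos, Real.sin_arccos]
      exact key
    rw [hxz]
    calc Real.arccos ⟪x, z⟫ ≤ Real.arccos (Real.cos (angle x y + angle y z)) := by
          rw [Real.arccos, Real.arccos]
          have := Real.monotone_arcsin hcos
          linarith
      _ = angle x y + angle y z :=
          Real.arccos_cos (add_nonneg (angle_nonneg _ _) (angle_nonneg _ _)) h.le


lemma angle_triangle' {V : Type*} [NormedAddCommGroup V] [InnerProductSpace ℝ V]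
    (x y z : V) : angle x z ≤ angle x y + angle y z := by
  rcases eq_or_ne x 0 with rfl | hx
  · simp only [angle_zero_left]
    linarith [angle_nonneg y z]
  rcases eq_or_ne z 0 with rfl | hz
  · simp only [angle_zero_right]
    linarith [angle_nonneg x y]
  rcases eq_or_ne y 0 with rfl | hy
  · simp only [angle_zero_left, angle_zero_right]
    linarith [angle_le_pi x z]
  · have hxp : (0:ℝ) < ‖x‖⁻¹ := inv_pos.2 (norm_pos_iff.2 hx)
    have hyp : (0:ℝ) < ‖y‖⁻¹ := inv_pos.2 (norm_pos_iff.2 hy)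
    have hzp : (0:ℝ) < ‖z‖⁻¹ := inv_pos.2 (norm_pos_iff.2 hz)
    have nx : ‖(‖x‖⁻¹ • x)‖ = 1 := by
      rw [norm_smul, norm_inv, norm_norm, inv_mul_cancel₀ (norm_ne_zero_iff.2 hx)]
    have ny : ‖(‖y‖⁻¹ • y)‖ = 1 := by
      rw [norm_smul, norm_inv, norm_norm, inv_mul_cancel₀ (norm_ne_zero_iff.2 hy)]
    have nz : ‖(‖z‖⁻¹ • z)‖ = 1 := by
      rw [norm_smul, norm_inv, norm_norm, inv_mul_cancel₀ (norm_ne_zero_iff.2 hz)]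
    have := angle_triangle_of_unit nx ny nz
    rwa [angle_smul_left_of_pos _ _ hxp, angle_smul_left_of_pos _ _ hxp,
      angle_smul_left_of_pos _ _ hyp, angle_smul_right_of_pos _ _ hzp,
      angle_smul_right_of_pos _ _ hyp, angle_smul_right_of_pos _ _ hzp] at this

/-- Splitting of the exterior angle: if `w = u + v` then
`angle w u + angle w v = angle v u`. -/
lemma angle_sum_split {V : Type*} [NormedAddCommGroup V] [InnerProductSpace ℝ V]
    {u v : V} (hv : v ≠ 0) (hw : u + v ≠ 0) :
    angle (u + v) u + angle (u + v) v = angle v u := by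
  have h := InnerProductGeometry.angle_add_angle_sub_add_angle_sub_eq_pi (x := u + v) (y := v)
    hv
  have h1 : u + v - v = u := by abel
  have h2 : v - (u + v) = -u := by abel
  rw [h1, h2, angle_neg_right] at h
  linarith

lemma sum_rot (n : ℕ) (g : ℕ → ℝ) (hg : ∀ j, g (j + n) = g j) :
    ∑ j ∈ Finset.range n, g (j + 1) = ∑ j ∈ Finset.range n, g j := by
  have h1 := Finset.sum_range_succ g n
  have h2 := Finset.sum_range_succ' g n
  have h3 : g n = g 0 := by simpa using hg 0
  rw [h1, h3] at h2
  linarith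

lemma sum_shift (n : ℕ) (f : ℕ → ℝ) (hf : ∀ j, f (j + n) = f j) (k : ℕ) :
    ∑ j ∈ Finset.range n, f (j + k) = ∑ j ∈ Finset.range n, f j := by
  induction k with
  | zero => simp
  | succ k ih =>
    have hg : ∀ j, (fun j => f (j + k)) (j + n) = (fun j => f (j + k)) j := by
      intro j
      simp only
      rw [show j + n + k = j + k + n by ring, hf]
    have hr := sum_rot n (fun j => f (j + k)) hg
    calc ∑ j ∈ Finset.range n, f (j + (k + 1))
        = ∑ j ∈ Finset.range n, f (j + 1 + k) := by
          apply Finset.sum_congr rfl; intro j _; congr 1; ring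
      _ = ∑ j ∈ Finset.range n, f (j + k) := hr
      _ = ∑ j ∈ Finset.range n, f j := ih

theorem fenchel_aux {V : Type*} [NormedAddCommGroup V] [InnerProductSpace ℝ V] :
    ∀ n : ℕ, 3 ≤ n → ∀ p : ℕ → V, (∀ j, p (j + n) = p j) →
    (∀ j, p j ≠ p (j + 1)) →
    2 * π ≤ ∑ m ∈ Finset.range n, angle (p (m + 2) - p (m + 1)) (p (m + 1) - p m) := by
  intro n hn
  induction n, hn using Nat.le_induction with
  | base =>
    intro p hper hcons
    have h3 : p 3 = p 0 := by simpa using hper 0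
    have h4 : p 4 = p 1 := by simpa using hper 1
    have hx : p 1 - p 0 ≠ 0 := sub_ne_zero.2 fun hh => hcons 0 (by norm_num [hh])
    have hy : p 2 - p 0 ≠ 0 := sub_ne_zero.2 fun hh => hcons 2 (by norm_num [h3, hh])
    have hsum := InnerProductGeometry.angle_add_angle_sub_add_angle_sub_eq_pi (p 1 - p 0) hy
    rw [Finset.sum_range_succ, Finset.sum_range_succ, Finset.sum_range_one]
    norm_num [h3, h4]
    have e0 : angle (p 2 - p 1) (p 1 - p 0)
        = π - angle (p 1 - p 0) (p 1 - p 0 - (p 2 - p 0)) := by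
      have hh : p 2 - p 1 = -(p 1 - p 0 - (p 2 - p 0)) := by abel
      rw [hh, angle_neg_left, angle_comm]
    have e1 : angle (p 0 - p 2) (p 2 - p 1)
        = π - angle (p 2 - p 0) (p 2 - p 0 - (p 1 - p 0)) := by
      have h5 : p 0 - p 2 = -(p 2 - p 0) := by abel
      have h6 : p 2 - p 1 = p 2 - p 0 - (p 1 - p 0) := by abel
      rw [h5, h6, angle_neg_left]
    have e2 : angle (p 1 - p 0) (p 0 - p 2) = π - angle (p 1 - p 0) (p 2 - p 0) := by
      have h5 : p 0 - p 2 = -(p 2 - p 0) := by abel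
      rw [h5, angle_neg_right]
    rw [e0, e1, e2]
    linarith
  | succ n hn3 ih =>
    intro p hper hcons
    by_cases hA : ∀ m, p (m + 2) = p m
    · have hterm : ∀ m ∈ Finset.range (n + 1),
          angle (p (m + 2) - p (m + 1)) (p (m + 1) - p m) = π := by
        intro m _
        rw [hA m]
        have hh : p m - p (m + 1) = -(p (m + 1) - p m) := by abel
        rw [hh]
        exact angle_neg_self_of_nonzero (sub_ne_zero.2 (hcons m).symm)
      rw [Finset.sum_congr rfl hterm, Finset.sum_const, Finset.card_range, nsmul_eq_mul]
      have hpi := Real.pi_pos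
      have hcast : (2:ℝ) ≤ ((n + 1 : ℕ) : ℝ) := by
        have : (2:ℕ) ≤ n + 1 := by omega
        exact_mod_cast this
      nlinarith
    · push_neg at hA
      obtain ⟨m, hm⟩ := hA
      set q : ℕ → V := fun j => p (j + (m + 2)) with hqdef
      have hqper : ∀ j, q (j + (n + 1)) = q j := by
        intro j
        simp only [hqdef]
        rw [show j + (n + 1) + (m + 2) = j + (m + 2) + (n + 1) by ring, hper]
      have hqcons : ∀ j, q j ≠ q (j + 1) := by
        intro j
        simp only [hqdef]
        rw [show j + 1 + (m + 2) = j + (m + 2) + 1 by ring]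
        exact hcons _
      have hsums : ∑ m' ∈ Finset.range (n + 1),
            angle (p (m' + 2) - p (m' + 1)) (p (m' + 1) - p m')
          = ∑ m' ∈ Finset.range (n + 1),
            angle (q (m' + 2) - q (m' + 1)) (q (m' + 1) - q m') := by
        have hs := sum_shift (n + 1)
          (fun j => angle (p (j + 2) - p (j + 1)) (p (j + 1) - p j))
          (fun j => by
            rw [show j + (n+1) + 2 = j + 2 + (n+1) by ring,
              show j + (n+1) + 1 = j + 1 + (n+1) by ring, hper, hper, hper])
          (m + 2)
        rw [← hs]
        apply Finset.sum_congr rfl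
        intro j _
        simp only [hqdef]
        rw [show j + (m + 2) + 2 = j + 2 + (m + 2) by ring,
          show j + (m + 2) + 1 = j + 1 + (m + 2) by ring]
      rw [hsums]
      obtain ⟨k, rfl⟩ : ∃ k, n = k + 3 := ⟨n - 3, by omega⟩
      have hspike : q (k + 2) ≠ q 0 := by
        simp only [hqdef]
        rw [show k + 2 + (m + 2) = m + (k + 3 + 1) by ring, hper, Nat.zero_add]
        exact Ne.symm hm
      set r : ℕ → V := fun j => q (j % (k + 3)) with hrdef
      have hrper : ∀ j, r (j + (k + 3)) = r j := by
        intro j; simp only [hrdef, Nat.add_mod_right]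
      have hrcons : ∀ j, r j ≠ r (j + 1) := by
        intro j
        simp only [hrdef]
        have hlt : j % (k + 3) < k + 3 := Nat.mod_lt _ (by omega)
        have h1m : 1 % (k + 3) = 1 := Nat.mod_eq_of_lt (by omega)
        rcases Nat.lt_or_ge (j % (k + 3) + 1) (k + 3) with hcase | hcase
        · rw [Nat.add_mod j 1, h1m, Nat.mod_eq_of_lt hcase]
          exact hqcons _
        · have hj : j % (k + 3) = k + 2 := by omega
          rw [Nat.add_mod j 1, h1m, hj, show k + 2 + 1 = k + 3 from rfl, Nat.mod_self]
          exact hspike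
      have hIH := ih r hrper hrcons
      have hq0 : q (k + 4) = q 0 := by
        have := hqper 0; rwa [show 0 + (k + 3 + 1) = k + 4 by ring] at this
      have hq1 : q (k + 5) = q 1 := by
        have := hqper 1; rwa [show 1 + (k + 3 + 1) = k + 5 by ring] at this
      have hmod : ∀ j, j < k + 3 → j % (k + 3) = j := fun j hj => Nat.mod_eq_of_lt hj
      have expand3 : ∀ f : ℕ → ℝ, ∑ j ∈ Finset.range (k + 3), f j
          = (∑ j ∈ Finset.range (k + 1), f j) + f (k + 1) + f (k + 2) := by
        intro f
        have e1 : ∑ j ∈ Finset.range (k + 3), f j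
            = (∑ j ∈ Finset.range (k + 2), f j) + f (k + 2) := Finset.sum_range_succ f (k + 2)
        have e2 : ∑ j ∈ Finset.range (k + 2), f j
            = (∑ j ∈ Finset.range (k + 1), f j) + f (k + 1) := Finset.sum_range_succ f (k + 1)
        rw [e1, e2]
      have expand4 : ∀ f : ℕ → ℝ, ∑ j ∈ Finset.range (k + 4), f j
          = (∑ j ∈ Finset.range (k + 1), f j) + f (k + 1) + f (k + 2) + f (k + 3) := by
        intro f
        have e1 : ∑ j ∈ Finset.range (k + 4), f j
            = (∑ j ∈ Finset.range (k + 3), f j) + f (k + 3) := Finset.sum_range_succ f (k + 3)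
        rw [e1, expand3 f]
      have hcompare : ∑ j ∈ Finset.range (k + 3),
            angle (r (j + 2) - r (j + 1)) (r (j + 1) - r j)
          ≤ ∑ j ∈ Finset.range (k + 3 + 1),
            angle (q (j + 2) - q (j + 1)) (q (j + 1) - q j) := by
        rw [show k + 3 + 1 = k + 4 from rfl]
        rw [expand3 (fun j => angle (r (j + 2) - r (j + 1)) (r (j + 1) - r j)),
          expand4 (fun j => angle (q (j + 2) - q (j + 1)) (q (j + 1) - q j))]
        have hhead : ∑ j ∈ Finset.range (k + 1),
              angle (r (j + 2) - r (j + 1)) (r (j + 1) - r j)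
            = ∑ j ∈ Finset.range (k + 1),
              angle (q (j + 2) - q (j + 1)) (q (j + 1) - q j) := by
          apply Finset.sum_congr rfl
          intro j hj
          have hj1 : j < k + 1 := Finset.mem_range.mp hj
          simp only [hrdef]
          rw [hmod j (by omega), hmod (j + 1) (by omega), hmod (j + 2) (by omega)]
        rw [hhead]
        have hr1 : r (k + 1) = q (k + 1) := by simp only [hrdef]; rw [hmod _ (by omega)]
        have hr2 : r (k + 2) = q (k + 2) := by simp only [hrdef]; rw [hmod _ (by omega)]
        have hr3 : r (k + 3) = q 0 := by
          simp only [hrdef]; rw [Nat.mod_self]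
        have hr4 : r (k + 4) = q 1 := by
          simp only [hrdef]
          rw [show k + 4 = 1 + (k + 3) by ring, Nat.add_mod_right,
            Nat.mod_eq_of_lt (by omega)]
        rw [show k + 1 + 2 = k + 3 from rfl, show k + 1 + 1 = k + 2 from rfl,
          show k + 2 + 2 = k + 4 from rfl, show k + 2 + 1 = k + 3 from rfl,
          show k + 3 + 2 = k + 5 from rfl, show k + 3 + 1 = k + 4 from rfl,
          hr1, hr2, hr3, hr4, hq0, hq1]
        have hvne : q 0 - q (k + 3) ≠ 0 :=
          sub_ne_zero.2 fun hh => (hqcons (k + 3)) (by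
            rw [show k + 3 + 1 = k + 4 from rfl, hq0, hh])
        have hwne : (q (k + 3) - q (k + 2)) + (q 0 - q (k + 3)) ≠ 0 := by
          have hww : (q (k + 3) - q (k + 2)) + (q 0 - q (k + 3)) = q 0 - q (k + 2) := by abel
          rw [hww]
          exact sub_ne_zero.2 (Ne.symm hspike)
        have hw1 : q 0 - q (k + 2) = (q (k + 3) - q (k + 2)) + (q 0 - q (k + 3)) := by abel
        rw [hw1]
        have t1 : angle ((q (k + 3) - q (k + 2)) + (q 0 - q (k + 3))) (q (k + 2) - q (k + 1))
            ≤ angle ((q (k + 3) - q (k + 2)) + (q 0 - q (k + 3))) (q (k + 3) - q (k + 2))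
              + angle (q (k + 3) - q (k + 2)) (q (k + 2) - q (k + 1)) :=
          angle_triangle' _ _ _
        have t2 : angle (q 1 - q 0) ((q (k + 3) - q (k + 2)) + (q 0 - q (k + 3)))
            ≤ angle (q 1 - q 0) (q 0 - q (k + 3))
              + angle (q 0 - q (k + 3)) ((q (k + 3) - q (k + 2)) + (q 0 - q (k + 3))) :=
          angle_triangle' _ _ _
        have t3 := angle_sum_split hvne hwne
        have t4 : angle (q 0 - q (k + 3)) ((q (k + 3) - q (k + 2)) + (q 0 - q (k + 3)))
            = angle ((q (k + 3) - q (k + 2)) + (q 0 - q (k + 3))) (q 0 - q (k + 3)) :=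
          angle_comm _ _
        linarith
      linarith

/-- Discrete Fenchel theorem: a closed polygon in ℝ³ (vertices indexed cyclically,
`p (j + n) = p j`), with at least 3 distinct vertices and all consecutive vertices
distinct, has total curvature (sum of its exterior angles) at least `2π`. -/
theorem discrete_fenchel (n : ℕ) (hn : 3 ≤ n) (p : ℕ → EuclideanSpace ℝ (Fin 3))
    (hper : ∀ j, p (j + n) = p j)
    (hcons : ∀ j, p j ≠ p (j + 1))
    (hdistinct : ∃ a b c : ℕ, p a ≠ p b ∧ p b ≠ p c ∧ p a ≠ p c) :
    2 * Real.pi ≤ ∑ m ∈ Finset.range n,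
      InnerProductGeometry.angle (p (m + 2) - p (m + 1)) (p (m + 1) - p m) := by
  exact fenchel_aux n hn p hper hcons
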